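/- For straight-line motion p(t) = p₀ + t·v₀ with ‖p₀‖ > r and h(p₀, v₀) < 0 (velocity strictly inside the collision cone, v₀ ≠ 0), there exists t > 0 such that ‖p(t)‖ < r. -/

import Mathlib

open Real RealInnerProductSpace

theorem collision_cone_unsafe_collides (r : ℝ) (hr : 0 < r)
    (p₀ v₀ : EuclideanSpace ℝ (Fin 3)) (hp : r < ‖p₀‖) (hv : v₀ ≠ 0)
    (hh : ⟪p₀, v₀⟫ + ‖v₀‖ * Real.sqrt (‖p₀‖ ^ 2 - r ^ 2) < 0) :
    ∃ t : ℝ, 0 < t ∧ ‖p₀ + t • v₀‖ < r := by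
  set a : ℝ := ⟪p₀, v₀⟫ with ha
  have hvpos : (0:ℝ) < ‖v₀‖ := norm_pos_iff.mpr hv
  have hsub : (0:ℝ) ≤ ‖p₀‖ ^ 2 - r ^ 2 := by nlinarith [hr.le, hp]
  have hs : Real.sqrt (‖p₀‖ ^ 2 - r ^ 2) ^ 2 = ‖p₀‖ ^ 2 - r ^ 2 := Real.sq_sqrt hsub
  have hsnn : (0:ℝ) ≤ Real.sqrt (‖p₀‖ ^ 2 - r ^ 2) := Real.sqrt_nonneg _
  have haneg : a < 0 := by nlinarith [mul_nonneg hvpos.le hsnn]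
  -- key inequality: a^2 > ‖v₀‖^2 * (‖p₀‖^2 - r^2)
  have hkey : ‖v₀‖ ^ 2 * (‖p₀‖ ^ 2 - r ^ 2) < a ^ 2 := by
    have h1 : ‖v₀‖ * Real.sqrt (‖p₀‖ ^ 2 - r ^ 2) < -a := by linarith
    nlinarith [mul_nonneg hvpos.le hsnn]
  refine ⟨-a / ‖v₀‖ ^ 2, div_pos (by linarith) (by positivity), ?_⟩
  set t : ℝ := -a / ‖v₀‖ ^ 2 with ht
  have hnormsq : ‖p₀ + t • v₀‖ ^ 2 = ‖p₀‖ ^ 2 + 2 * (t * a) + t ^ 2 * ‖v₀‖ ^ 2 := by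
    rw [norm_add_sq_real, real_inner_smul_right, norm_smul]
    ring_nf
    rw [Real.norm_eq_abs, sq_abs]
  have hv2 : ‖v₀‖ ^ 2 ≠ 0 := by positivity
  have hta : t * ‖v₀‖ ^ 2 = -a := by rw [ht, div_mul_cancel₀ _ hv2]
  have hlt : ‖p₀ + t • v₀‖ ^ 2 < r ^ 2 := by
    rw [hnormsq]
    have : t ^ 2 * ‖v₀‖ ^ 2 = -(t * a) := by
      have : t ^ 2 * ‖v₀‖ ^ 2 = t * (t * ‖v₀‖ ^ 2) := by ring
      rw [this, hta]; ring
    rw [this]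
    have h2 : t * a * ‖v₀‖ ^ 2 = -(a ^ 2) := by
      have : t * a * ‖v₀‖ ^ 2 = a * (t * ‖v₀‖ ^ 2) := by ring
      rw [this, hta]; ring
    nlinarith [sq_nonneg ‖v₀‖, hvpos]
  exact lt_of_pow_lt_pow_left₀ 2 hr.le hlt
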